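/- Suppose F = (1/n) Σ_{i=1}^n f_i is average-L-smooth. Consider SARAH with learning rate η satisfying 0 < η ≤ 2/(L(√(1+4m)+1)). Then for any initial point w̃_0 and any lower bound F* of F, (1/((m+1)S)) Σ_{s=1}^{S} Σ_{t=0}^{m} E[‖∇F(w_t^{(s)})‖²] ≤ (2/(η(m+1)S)) (F(w̃_0) − F*). -/

import Mathlib

noncomputable section

abbrev Vec (d : ℕ) : Type := EuclideanSpace ℝ (Fin d)

/-- One inner loop of SARAH: `(innerSeq d n f F η x0 ι t) = (w_t, v_t)`, where the step from
`t` to `t+1` uses the sampled index `ι t` (so `ι t` plays the role of `i_{t+1}`). -/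
noncomputable def innerSeq (d n : ℕ) (f : Fin n → Vec d → ℝ) (F : Vec d → ℝ) (η : ℝ)
    (x0 : Vec d) (ι : ℕ → Fin n) : ℕ → Vec d × Vec d
  | 0 => (x0, gradient F x0)
  | t + 1 =>
    let p := innerSeq d n f F η x0 ι t
    let w := p.1 - η • p.2
    (w, gradient (f (ι t)) w - gradient (f (ι t)) p.1 + p.2)

/-- Outer iterates of SARAH: `outerSeq d n m f F η w0 ω s = w̃_s`, where the `s`-th outer
loop uses the index sequence `ω s` and `w̃_s = w_{m+1}^{(s)}`. -/
noncomputable def outerSeq (d n m : ℕ) (f : Fin n → Vec d → ℝ) (F : Vec d → ℝ) (η : ℝ)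
    (w0 : Vec d) (ω : ℕ → ℕ → Fin n) : ℕ → Vec d
  | 0 => w0
  | s + 1 => (innerSeq d n f F η (outerSeq d n m f F η w0 ω s) (ω s) (m + 1)).1

/-- Expectation over the uniformly random index sequences of SARAH with (at least) `S` outer
loops of `m` inner steps each: the average of `X` over all `ω : Fin S → Fin m → Fin n`,
extended by a dummy index outside this range. -/
noncomputable def sarahE (n m S : ℕ) (hn : 0 < n) (X : (ℕ → ℕ → Fin n) → ℝ) : ℝ :=
  (∑ ω : Fin S → Fin m → Fin n,
      X fun s t => if h : s < S ∧ t < m then ω ⟨s, h.1⟩ ⟨t, h.2⟩ else ⟨0, hn⟩) /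
    (Fintype.card (Fin S → Fin m → Fin n) : ℝ)




open InnerProductSpace in
lemma gradF_eq {d n : ℕ} (f : Fin n → Vec d → ℝ) (F : Vec d → ℝ)
    (hF : ∀ w, F w = (∑ i, f i w) / n) (hdiff : ∀ i, Differentiable ℝ (f i)) (x : Vec d) :
    HasGradientAt F ((n : ℝ)⁻¹ • ∑ i, gradient (f i) x) x := by
  have h1 : HasFDerivAt (fun w => ∑ i, f i w)
      (∑ i, toDual ℝ (Vec d) (gradient (f i) x)) x :=
    HasFDerivAt.fun_sum fun i _ => (hdiff i x).hasGradientAt.hasFDerivAt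
  have h2 := h1.const_mul ((n : ℝ)⁻¹)
  have hFe : F = fun w => (n : ℝ)⁻¹ * ∑ i, f i w := by
    funext w; rw [hF w, div_eq_inv_mul]
  rw [hasGradientAt_iff_hasFDerivAt, hFe]
  convert h2 using 1
  · rfl
  · simp [map_smul, map_sum, smul_eq_mul]

lemma gradF_avg {d n : ℕ} (f : Fin n → Vec d → ℝ) (F : Vec d → ℝ)
    (hF : ∀ w, F w = (∑ i, f i w) / n) (hdiff : ∀ i, Differentiable ℝ (f i)) (x : Vec d) :
    gradient F x = (n : ℝ)⁻¹ • ∑ i, gradient (f i) x :=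
  (gradF_eq f F hF hdiff x).gradient

open RealInnerProductSpace in
lemma gradF_lip {d n : ℕ} (hn : 0 < n) (f : Fin n → Vec d → ℝ) (F : Vec d → ℝ)
    (hF : ∀ w, F w = (∑ i, f i w) / n) (hdiff : ∀ i, Differentiable ℝ (f i))
    (L : ℝ) (hL : 0 < L)
    (havg : ∀ w w' : Vec d,
      (∑ i, ‖gradient (f i) w - gradient (f i) w'‖ ^ 2) / n ≤ L ^ 2 * ‖w - w'‖ ^ 2)
    (x y : Vec d) : ‖gradient F x - gradient F y‖ ≤ L * ‖x - y‖ := by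
  have hngt : (0:ℝ) < n := by exact_mod_cast hn
  rw [gradF_avg f F hF hdiff x, gradF_avg f F hF hdiff y, ← smul_sub, ← Finset.sum_sub_distrib]
  have h1 : ‖∑ i, (gradient (f i) x - gradient (f i) y)‖
      ≤ ∑ i, ‖gradient (f i) x - gradient (f i) y‖ := norm_sum_le _ _
  have h2 : (∑ i, ‖gradient (f i) x - gradient (f i) y‖) ^ 2
      ≤ (n : ℝ) * ∑ i, ‖gradient (f i) x - gradient (f i) y‖ ^ 2 := by
    simpa using sq_sum_le_card_mul_sum_sq (s := (Finset.univ : Finset (Fin n)))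
      (f := fun i => ‖gradient (f i) x - gradient (f i) y‖)
  have h3 := havg x y
  have h4 : (0:ℝ) ≤ ∑ i, ‖gradient (f i) x - gradient (f i) y‖ :=
    Finset.sum_nonneg fun i _ => norm_nonneg _
  rw [norm_smul]
  have h5 : ‖(n:ℝ)⁻¹‖ = (n:ℝ)⁻¹ := by
    rw [Real.norm_eq_abs, abs_of_nonneg (by positivity)]
  rw [h5]
  rw [div_le_iff₀ hngt] at h3
  set A := ‖∑ i, (gradient (f i) x - gradient (f i) y)‖ with hA
  have hR : (0:ℝ) ≤ (n:ℝ) * (L * ‖x - y‖) := by positivity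
  have hAB : A ^ 2 ≤ (∑ i, ‖gradient (f i) x - gradient (f i) y‖) ^ 2 := by
    nlinarith [norm_nonneg (∑ i, (gradient (f i) x - gradient (f i) y))]
  have hA2 : A ^ 2 ≤ ((n:ℝ) * (L * ‖x - y‖)) ^ 2 := by nlinarith [hAB, h2, h3, hngt]
  have hfin : A ≤ (n:ℝ) * (L * ‖x - y‖) := by
    have := Real.sqrt_le_sqrt hA2
    rwa [Real.sqrt_sq (norm_nonneg _), Real.sqrt_sq hR] at this
  rw [inv_mul_le_iff₀ hngt]
  linarith

open RealInnerProductSpace in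
lemma descent {d : ℕ} (F : Vec d → ℝ) (hFd : Differentiable ℝ F) (L : ℝ) (hL : 0 < L)
    (hlip : ∀ x y : Vec d, ‖gradient F x - gradient F y‖ ≤ L * ‖x - y‖) (x y : Vec d) :
    F y ≤ F x + ⟪gradient F x, y - x⟫ + L / 2 * ‖y - x‖ ^ 2 := by
  set v := y - x with hv
  set g : ℝ → ℝ := fun t => F (x + t • v) - t * ⟪gradient F x, v⟫ - t ^ 2 * (L / 2 * ‖v‖ ^ 2)
    with hg
  have hder : ∀ t : ℝ, HasDerivAt g
      (⟪gradient F (x + t • v), v⟫ - ⟪gradient F x, v⟫ - 2 * t * (L / 2 * ‖v‖ ^ 2)) t := by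
    intro t
    have hc : HasDerivAt (fun t : ℝ => x + t • v) v t := by
      simpa using ((hasDerivAt_id t).smul_const v).const_add x
    have hFc : HasDerivAt (fun t : ℝ => F (x + t • v)) ⟪gradient F (x + t • v), v⟫ t := by
      have := ((hFd (x + t • v)).hasGradientAt.hasFDerivAt).comp_hasDerivAt t hc
      simpa [InnerProductSpace.toDual_apply_apply, Function.comp_def] using this
    have h2 : HasDerivAt (fun t : ℝ => t * ⟪gradient F x, v⟫) ⟪gradient F x, v⟫ t := by
      simpa using (hasDerivAt_id t).mul_const ⟪gradient F x, v⟫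
    have h3 : HasDerivAt (fun t : ℝ => t ^ 2 * (L / 2 * ‖v‖ ^ 2))
        (2 * t * (L / 2 * ‖v‖ ^ 2)) t := by
      simpa [mul_comm] using (hasDerivAt_pow 2 t).mul_const (L / 2 * ‖v‖ ^ 2)
    exact (hFc.sub h2).sub h3
  have hmono : AntitoneOn g (Set.Icc 0 1) := by
    apply antitoneOn_of_deriv_nonpos (convex_Icc 0 1)
    · exact Continuous.continuousOn (by
        have : ∀ t, HasDerivAt g _ t := hder
        exact (fun t => (hder t).continuousAt) |> fun h => continuous_iff_continuousAt.mpr h)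
    · intro t _; exact ((hder t).differentiableAt).differentiableWithinAt
    · intro t ht
      rw [interior_Icc] at ht
      rw [(hder t).deriv]
      have h1 : ⟪gradient F (x + t • v) - gradient F x, v⟫
          ≤ ‖gradient F (x + t • v) - gradient F x‖ * ‖v‖ := real_inner_le_norm _ _
      have h2 : ‖gradient F (x + t • v) - gradient F x‖ ≤ L * (t * ‖v‖) := by
        have := hlip (x + t • v) x
        simpa [norm_smul, abs_of_nonneg (le_of_lt ht.1)] using this
      rw [inner_sub_left] at h1
      nlinarith [norm_nonneg v, ht.1.le, mul_nonneg (mul_nonneg hL.le ht.1.le) (sq_nonneg ‖v‖)]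
  have := hmono (Set.left_mem_Icc.mpr zero_le_one) (Set.right_mem_Icc.mpr zero_le_one)
    zero_le_one
  simp only [hg] at this
  have e1 : x + (1:ℝ) • v = y := by rw [one_smul, hv]; abel
  have e0 : x + (0:ℝ) • v = x := by simp
  rw [e1, e0] at this
  nlinarith [this]
open RealInnerProductSpace in
lemma step_ineq {d : ℕ} (F : Vec d → ℝ) (hFd : Differentiable ℝ F) (L η : ℝ) (hL : 0 < L)
    (hlip : ∀ x y : Vec d, ‖gradient F x - gradient F y‖ ≤ L * ‖x - y‖)
    (w v : Vec d) :
    F (w - η • v) ≤ F w - η / 2 * ‖gradient F w‖ ^ 2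
      - (η / 2 - L * η ^ 2 / 2) * ‖v‖ ^ 2 + η / 2 * ‖gradient F w - v‖ ^ 2 := by
  have h := descent F hFd L hL hlip w (w - η • v)
  have e1 : w - η • v - w = -(η • v) := by abel
  rw [e1] at h
  have h2 : ⟪gradient F w, -(η • v)⟫ = -(η * ⟪gradient F w, v⟫) := by
    rw [inner_neg_right, real_inner_smul_right]
  have h3 : ‖gradient F w - v‖ ^ 2
      = ‖gradient F w‖ ^ 2 - 2 * ⟪gradient F w, v⟫ + ‖v‖ ^ 2 := by
    rw [@norm_sub_sq_real]
  have h4 : ‖-(η • v)‖ ^ 2 = η ^ 2 * ‖v‖ ^ 2 := by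
    rw [norm_neg, norm_smul, mul_pow, Real.norm_eq_abs, sq_abs]
  rw [h2, h4] at h
  rw [h3]
  nlinarith [h]

open RealInnerProductSpace in
lemma variance_step {d n : ℕ} (hn : 0 < n) (f : Fin n → Vec d → ℝ) (F : Vec d → ℝ)
    (hF : ∀ w, F w = (∑ i, f i w) / n) (hdiff : ∀ i, Differentiable ℝ (f i))
    (L : ℝ)
    (havg : ∀ w w' : Vec d,
      (∑ i, ‖gradient (f i) w - gradient (f i) w'‖ ^ 2) / n ≤ L ^ 2 * ‖w - w'‖ ^ 2)
    (x y u : Vec d) :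
    ∑ j, ‖gradient F y - (gradient (f j) y - gradient (f j) x + u)‖ ^ 2
      ≤ (n : ℝ) * (‖gradient F x - u‖ ^ 2 + L ^ 2 * ‖y - x‖ ^ 2) := by
  have hngt : (0:ℝ) < n := by exact_mod_cast hn
  set A := gradient F x - u with hA
  set δ : Fin n → Vec d := fun j => gradient (f j) y - gradient (f j) x with hδ
  set δb : Vec d := gradient F y - gradient F x with hδb
  have hsum : ∑ j, δ j = (n : ℝ) • δb := by
    rw [hδb, gradF_avg f F hF hdiff x, gradF_avg f F hF hdiff y, ← smul_sub,
      ← Finset.sum_sub_distrib, smul_smul, mul_inv_cancel₀ (ne_of_gt hngt), one_smul]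
  have key : ∀ j, gradient F y - (gradient (f j) y - gradient (f j) x + u) = A + (δb - δ j) := by
    intro j; simp only [hA, hδb, hδ]; abel
  have expand : ∀ j : Fin n, ‖A + (δb - δ j)‖ ^ 2
      = ‖A‖ ^ 2 + 2 * ⟪A, δb - δ j⟫ + (‖δb‖ ^ 2 - 2 * ⟪δb, δ j⟫ + ‖δ j‖ ^ 2) := by
    intro j
    rw [norm_add_sq_real A (δb - δ j), norm_sub_sq_real δb (δ j)]
  have c2 : ∑ j : Fin n, 2 * ⟪A, δb - δ j⟫ = 0 := by
    rw [← Finset.mul_sum, ← inner_sum]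
    have hz : ∑ j : Fin n, (δb - δ j) = 0 := by
      rw [Finset.sum_sub_distrib, hsum, Finset.sum_const, Finset.card_univ, Fintype.card_fin,
        sub_eq_zero, Nat.cast_smul_eq_nsmul]
    simp [hz]
  have c3 : ∑ j : Fin n, 2 * ⟪δb, δ j⟫ = 2 * ((n:ℝ) * ‖δb‖ ^ 2) := by
    rw [← Finset.mul_sum, ← inner_sum, hsum, real_inner_smul_right,
      real_inner_self_eq_norm_sq]
    try ring
  have sum_eq : ∑ j, ‖gradient F y - (gradient (f j) y - gradient (f j) x + u)‖ ^ 2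
      = (n:ℝ) * ‖A‖ ^ 2 + ((n:ℝ) * ‖δb‖ ^ 2 - 2 * ((n:ℝ) * ‖δb‖ ^ 2) + ∑ j, ‖δ j‖ ^ 2) := by
    rw [Finset.sum_congr rfl fun j _ => by rw [key j, expand j]]
    simp only [Finset.sum_add_distrib, Finset.sum_sub_distrib, c2, c3, Finset.sum_const,
      Finset.card_univ, Fintype.card_fin, nsmul_eq_mul]
    try ring
  rw [sum_eq]
  have h3 := havg y x
  rw [div_le_iff₀ hngt] at h3
  have hyx : ‖y - x‖ = ‖x - y‖ := norm_sub_rev y x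
  have hδsum : ∑ j, ‖δ j‖ ^ 2 ≤ L ^ 2 * ‖y - x‖ ^ 2 * n := by
    simpa [hδ, hyx] using h3
  nlinarith [sq_nonneg ‖δb‖, hδsum]

lemma innerSeq_congr {d n : ℕ} (f : Fin n → Vec d → ℝ) (F : Vec d → ℝ) (η : ℝ)
    (x0 : Vec d) (ι ι' : ℕ → Fin n) :
    ∀ t : ℕ, (∀ s < t, ι s = ι' s) →
      innerSeq d n f F η x0 ι t = innerSeq d n f F η x0 ι' t := by
  intro t
  induction t with
  | zero => intro _; rfl
  | succ t ih =>
    intro h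
    have h1 := ih fun s hs => h s (Nat.lt_succ_of_lt hs)
    have h2 := h t (Nat.lt_succ_self t)
    simp only [innerSeq, h1, h2]
/-- Extension of a finite index tuple. -/
def extSeq {n : ℕ} (hn : 0 < n) {m : ℕ} (κ : Fin m → Fin n) : ℕ → Fin n :=
  fun t => if h : t < m then κ ⟨t, h⟩ else ⟨0, hn⟩

lemma eta_cond (L η : ℝ) (m : ℕ) (hL : 0 < L) (hη0 : 0 < η)
    (hη : η ≤ 2 / (L * (Real.sqrt (1 + 4 * (m : ℝ)) + 1))) :
    L ^ 2 * η ^ 2 * m + L * η ≤ 1 := by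
  set σ := Real.sqrt (1 + 4 * (m : ℝ)) with hσ
  have hσ1 : 1 ≤ σ := by
    have h0 : (0:ℝ) ≤ (m:ℝ) := Nat.cast_nonneg m
    have := Real.sqrt_le_sqrt (show (1:ℝ) ≤ 1 + 4 * (m:ℝ) by linarith)
    simpa [hσ] using this
  have hσq : σ ^ 2 = 1 + 4 * (m : ℝ) := Real.sq_sqrt (by positivity)
  set a := L * η with ha
  have hden : (0:ℝ) < L * (σ + 1) := by positivity
  have h2 : a * (σ + 1) ≤ 2 := by
    rw [le_div_iff₀ hden] at hη
    nlinarith [hη]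
  have h3 : (0:ℝ) ≤ 2 + a * (σ - 1) := by nlinarith [mul_pos hL hη0]
  have h4 : (0:ℝ) ≤ (2 - a * (σ + 1)) * (2 + a * (σ - 1)) :=
    mul_nonneg (by linarith) h3
  have h5 : a ^ 2 * σ ^ 2 = a ^ 2 * (1 + 4 * (m:ℝ)) := by rw [hσq]
  have h6 : L ^ 2 * η ^ 2 = a ^ 2 := by rw [ha]; ring
  nlinarith [h4, h5, h6]

section Loop

variable {d n m : ℕ} (hn : 0 < n) (f : Fin n → Vec d → ℝ) (F : Vec d → ℝ) (η : ℝ)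

/-- conditioning step: expected new variance bound. -/
lemma cond_step
    (hF : ∀ w, F w = (∑ i, f i w) / n) (hdiff : ∀ i, Differentiable ℝ (f i))
    (L : ℝ)
    (havg : ∀ w w' : Vec d,
      (∑ i, ‖gradient (f i) w - gradient (f i) w'‖ ^ 2) / n ≤ L ^ 2 * ‖w - w'‖ ^ 2)
    (x0 : Vec d) (r : ℕ) (hr : r < m) :
    ∑ κ : Fin m → Fin n,
        ‖gradient F (innerSeq d n f F η x0 (extSeq hn κ) (r+1)).1
          - (innerSeq d n f F η x0 (extSeq hn κ) (r+1)).2‖ ^ 2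
      ≤ ∑ κ : Fin m → Fin n,
        (‖gradient F (innerSeq d n f F η x0 (extSeq hn κ) r).1
            - (innerSeq d n f F η x0 (extSeq hn κ) r).2‖ ^ 2
          + L ^ 2 * η ^ 2 * ‖(innerSeq d n f F η x0 (extSeq hn κ) r).2‖ ^ 2) := by
  classical
  set p : Fin m := ⟨r, hr⟩ with hp
  set e := Equiv.funSplitAt p (Fin n) with he
  have esymm_self : ∀ (j : Fin n) (rest : {q : Fin m // q ≠ p} → Fin n),
      e.symm (j, rest) p = j := by
    intro j rest
    simp [he, Equiv.funSplitAt, Equiv.piSplitAt]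
  have esymm_ne : ∀ (j : Fin n) (rest : {q : Fin m // q ≠ p} → Fin n) (q : Fin m)
      (hq : q ≠ p), e.symm (j, rest) q = rest ⟨q, hq⟩ := by
    intro j rest q hq
    simp [he, Equiv.funSplitAt, Equiv.piSplitAt, hq]
  have hsum : ∀ (g : (Fin m → Fin n) → ℝ),
      ∑ κ, g κ = ∑ rest : {q : Fin m // q ≠ p} → Fin n, ∑ j : Fin n, g (e.symm (j, rest)) := by
    intro g
    rw [← Equiv.sum_comp e.symm g, Fintype.sum_prod_type, Finset.sum_comm]
  rw [hsum, hsum]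
  apply Finset.sum_le_sum
  intro rest _
  -- all history quantities are independent of j
  have hagree : ∀ (j j' : Fin n) (s : ℕ), s < r →
      extSeq hn (e.symm (j, rest)) s = extSeq hn (e.symm (j', rest)) s := by
    intro j j' s hs
    have hsm : s < m := lt_trans hs hr
    have hne : (⟨s, hsm⟩ : Fin m) ≠ p := by
      simp only [hp, ne_eq, Fin.mk.injEq]
      omega
    simp only [extSeq, dif_pos hsm, esymm_ne _ _ _ hne]
  have hInner : ∀ j : Fin n,
      innerSeq d n f F η x0 (extSeq hn (e.symm (j, rest))) r
        = innerSeq d n f F η x0 (extSeq hn (e.symm (⟨0, hn⟩, rest))) r := by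
    intro j
    exact innerSeq_congr f F η x0 _ _ r (fun s hs => hagree j ⟨0, hn⟩ s hs)
  set q0 := innerSeq d n f F η x0 (extSeq hn (e.symm (⟨0, hn⟩, rest))) r with hq0
  have hextr : ∀ j : Fin n, extSeq hn (e.symm (j, rest)) r = j := by
    intro j
    simp only [extSeq, dif_pos hr]
    exact esymm_self j rest
  have hstep : ∀ j : Fin n,
      innerSeq d n f F η x0 (extSeq hn (e.symm (j, rest))) (r+1)
        = (q0.1 - η • q0.2,
            gradient (f j) (q0.1 - η • q0.2) - gradient (f j) q0.1 + q0.2) := by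
    intro j
    show (let pp := innerSeq d n f F η x0 (extSeq hn (e.symm (j, rest))) r
          let w := pp.1 - η • pp.2
          (w, gradient (f (extSeq hn (e.symm (j, rest)) r)) w
              - gradient (f (extSeq hn (e.symm (j, rest)) r)) pp.1 + pp.2)) = _
    simp only [hInner j, hextr j, ← hq0]
  calc ∑ j : Fin n, ‖gradient F (innerSeq d n f F η x0 (extSeq hn (e.symm (j, rest))) (r+1)).1
          - (innerSeq d n f F η x0 (extSeq hn (e.symm (j, rest))) (r+1)).2‖ ^ 2
      = ∑ j : Fin n, ‖gradient F (q0.1 - η • q0.2)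
          - (gradient (f j) (q0.1 - η • q0.2) - gradient (f j) q0.1 + q0.2)‖ ^ 2 := by
        refine Finset.sum_congr rfl fun j _ => ?_
        rw [hstep j]
    _ ≤ (n : ℝ) * (‖gradient F q0.1 - q0.2‖ ^ 2 + L ^ 2 * ‖(q0.1 - η • q0.2) - q0.1‖ ^ 2) :=
        variance_step hn f F hF hdiff L havg q0.1 (q0.1 - η • q0.2) q0.2
    _ = ∑ j : Fin n, (‖gradient F (innerSeq d n f F η x0 (extSeq hn (e.symm (j, rest))) r).1
            - (innerSeq d n f F η x0 (extSeq hn (e.symm (j, rest))) r).2‖ ^ 2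
          + L ^ 2 * η ^ 2 * ‖(innerSeq d n f F η x0 (extSeq hn (e.symm (j, rest))) r).2‖ ^ 2) := by
        have hyx : (q0.1 - η • q0.2) - q0.1 = -(η • q0.2) := by abel
        have hn2 : ‖(q0.1 - η • q0.2) - q0.1‖ ^ 2 = η ^ 2 * ‖q0.2‖ ^ 2 := by
          rw [hyx, norm_neg, norm_smul, mul_pow, Real.norm_eq_abs, sq_abs]
        rw [hn2]
        rw [Finset.sum_congr rfl (fun j _ => by rw [hInner j])]
        rw [Finset.sum_const, Finset.card_univ, Fintype.card_fin, nsmul_eq_mul]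
        ring

end Loop
section Loop2

variable {d n m : ℕ}

lemma variance_bound (hn : 0 < n) (f : Fin n → Vec d → ℝ) (F : Vec d → ℝ) (η : ℝ)
    (hF : ∀ w, F w = (∑ i, f i w) / n) (hdiff : ∀ i, Differentiable ℝ (f i))
    (L : ℝ)
    (havg : ∀ w w' : Vec d,
      (∑ i, ‖gradient (f i) w - gradient (f i) w'‖ ^ 2) / n ≤ L ^ 2 * ‖w - w'‖ ^ 2)
    (x0 : Vec d) :
    ∀ t, t ≤ m →
      ∑ κ : Fin m → Fin n,
          ‖gradient F (innerSeq d n f F η x0 (extSeq hn κ) t).1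
            - (innerSeq d n f F η x0 (extSeq hn κ) t).2‖ ^ 2
        ≤ L ^ 2 * η ^ 2 *
            ∑ j ∈ Finset.range t, ∑ κ : Fin m → Fin n,
              ‖(innerSeq d n f F η x0 (extSeq hn κ) j).2‖ ^ 2 := by
  intro t
  induction t with
  | zero => intro _; simp [innerSeq]
  | succ r ih =>
    intro hr
    have hrm : r < m := hr
    have h1 := cond_step hn f F η hF hdiff L havg x0 r hrm
    have h2 := ih (le_of_lt hrm)
    rw [Finset.sum_add_distrib] at h1
    rw [Finset.sum_range_succ, mul_add]
    have h3 : ∑ κ : Fin m → Fin n,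
        L ^ 2 * η ^ 2 * ‖(innerSeq d n f F η x0 (extSeq hn κ) r).2‖ ^ 2
        = L ^ 2 * η ^ 2 * ∑ κ : Fin m → Fin n,
            ‖(innerSeq d n f F η x0 (extSeq hn κ) r).2‖ ^ 2 := by
      rw [Finset.mul_sum]
    rw [h3] at h1
    linarith

lemma inner_loop (hn : 0 < n) (f : Fin n → Vec d → ℝ) (F : Vec d → ℝ) (η : ℝ)
    (hF : ∀ w, F w = (∑ i, f i w) / n) (hdiff : ∀ i, Differentiable ℝ (f i))
    (L : ℝ) (hL : 0 < L)
    (havg : ∀ w w' : Vec d,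
      (∑ i, ‖gradient (f i) w - gradient (f i) w'‖ ^ 2) / n ≤ L ^ 2 * ‖w - w'‖ ^ 2)
    (hη0 : 0 < η) (heta : L ^ 2 * η ^ 2 * m + L * η ≤ 1) (x0 : Vec d) :
    ∑ κ : Fin m → Fin n, F (innerSeq d n f F η x0 (extSeq hn κ) (m+1)).1
      + η / 2 * ∑ t ∈ Finset.range (m+1), ∑ κ : Fin m → Fin n,
          ‖gradient F (innerSeq d n f F η x0 (extSeq hn κ) t).1‖ ^ 2
    ≤ (Fintype.card (Fin m → Fin n) : ℝ) * F x0 := by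
  have hFd : Differentiable ℝ F := fun x => (gradF_eq f F hF hdiff x).differentiableAt
  have hlip : ∀ x y : Vec d, ‖gradient F x - gradient F y‖ ≤ L * ‖x - y‖ :=
    gradF_lip hn f F hF hdiff L hL havg
  set IS := fun (κ : Fin m → Fin n) (t : ℕ) => innerSeq d n f F η x0 (extSeq hn κ) t with hIS
  set G : ℕ → ℝ := fun t => ∑ κ : Fin m → Fin n, F (IS κ t).1 with hG
  set Ngrad : ℕ → ℝ := fun t => ∑ κ : Fin m → Fin n, ‖gradient F (IS κ t).1‖ ^ 2 with hNgrad
  set Qv : ℕ → ℝ := fun t => ∑ κ : Fin m → Fin n, ‖(IS κ t).2‖ ^ 2 with hQv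
  set Pv : ℕ → ℝ := fun t => ∑ κ : Fin m → Fin n,
    ‖gradient F (IS κ t).1 - (IS κ t).2‖ ^ 2 with hPv
  have hsumstep : ∀ t : ℕ, G (t+1) - G t
      ≤ -(η / 2) * Ngrad t - (η / 2 - L * η ^ 2 / 2) * Qv t + η / 2 * Pv t := by
    intro t
    have hk : ∀ κ : Fin m → Fin n, F (IS κ (t+1)).1 - F (IS κ t).1
        ≤ -(η / 2) * ‖gradient F (IS κ t).1‖ ^ 2
          - (η / 2 - L * η ^ 2 / 2) * ‖(IS κ t).2‖ ^ 2
          + η / 2 * ‖gradient F (IS κ t).1 - (IS κ t).2‖ ^ 2 := by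
      intro κ
      have hfst : (IS κ (t+1)).1 = (IS κ t).1 - η • (IS κ t).2 := rfl
      have := step_ineq F hFd L η hL hlip (IS κ t).1 (IS κ t).2
      rw [← hfst] at this
      linarith
    have := Finset.sum_le_sum (s := (Finset.univ : Finset (Fin m → Fin n))) (fun κ _ => hk κ)
    simp only [Finset.sum_sub_distrib, Finset.sum_add_distrib, ← Finset.mul_sum] at this ⊢
    simp only [hG, hNgrad, hQv, hPv]
    convert this using 2 <;> rw [Finset.mul_sum]
  have htel : G (m+1) - G 0 = ∑ t ∈ Finset.range (m+1), (G (t+1) - G t) :=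
    (Finset.sum_range_sub G (m+1)).symm
  have hsum : G (m+1) - G 0
      ≤ -(η / 2) * ∑ t ∈ Finset.range (m+1), Ngrad t
        - (η / 2 - L * η ^ 2 / 2) * ∑ t ∈ Finset.range (m+1), Qv t
        + η / 2 * ∑ t ∈ Finset.range (m+1), Pv t := by
    rw [htel]
    have := Finset.sum_le_sum (fun t (_ : t ∈ Finset.range (m+1)) => hsumstep t)
    simpa [Finset.sum_add_distrib, Finset.sum_sub_distrib, Finset.mul_sum] using this
  have hQnonneg : ∀ t, 0 ≤ Qv t := fun t =>
    Finset.sum_nonneg fun κ _ => by positivity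
  have hPbd : ∑ t ∈ Finset.range (m+1), Pv t
      ≤ L ^ 2 * η ^ 2 * ((m : ℝ) * ∑ t ∈ Finset.range (m+1), Qv t) := by
    have h1 : ∀ t ∈ Finset.range (m+1), Pv t
        ≤ L ^ 2 * η ^ 2 * ∑ j ∈ Finset.range t, Qv j := by
      intro t ht
      exact variance_bound hn f F η hF hdiff L havg x0 t
        (Nat.lt_succ_iff.mp (Finset.mem_range.mp ht))
    have h2 := Finset.sum_le_sum h1
    have h3 : ∑ t ∈ Finset.range (m+1), ∑ j ∈ Finset.range t, Qv j
        ≤ (m : ℝ) * ∑ t ∈ Finset.range (m+1), Qv t := by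
      rw [Finset.sum_range_succ']
      simp only [Finset.range_zero, Finset.sum_empty, add_zero]
      calc ∑ t ∈ Finset.range m, ∑ j ∈ Finset.range (t+1), Qv j
          ≤ ∑ _t ∈ Finset.range m, ∑ j ∈ Finset.range (m+1), Qv j := by
            refine Finset.sum_le_sum fun t ht => ?_
            refine Finset.sum_le_sum_of_subset_of_nonneg ?_ fun j _ _ => hQnonneg j
            exact Finset.range_subset_range.mpr (by have := Finset.mem_range.mp ht; omega)
        _ = (m : ℝ) * ∑ t ∈ Finset.range (m+1), Qv t := by
            rw [Finset.sum_const, Finset.card_range, nsmul_eq_mul]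
    calc ∑ t ∈ Finset.range (m+1), Pv t
        ≤ ∑ t ∈ Finset.range (m+1), L ^ 2 * η ^ 2 * ∑ j ∈ Finset.range t, Qv j := h2
      _ = L ^ 2 * η ^ 2 * ∑ t ∈ Finset.range (m+1), ∑ j ∈ Finset.range t, Qv j := by
          rw [Finset.mul_sum]
      _ ≤ L ^ 2 * η ^ 2 * ((m : ℝ) * ∑ t ∈ Finset.range (m+1), Qv t) := by
          apply mul_le_mul_of_nonneg_left h3 (by positivity)
  have hG0 : G 0 = (Fintype.card (Fin m → Fin n) : ℝ) * F x0 := by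
    simp only [hG]
    have : ∀ κ : Fin m → Fin n, (IS κ 0).1 = x0 := fun κ => rfl
    simp [this, Finset.sum_const, Finset.card_univ]
  have hQS : 0 ≤ ∑ t ∈ Finset.range (m+1), Qv t :=
    Finset.sum_nonneg fun t _ => hQnonneg t
  have hcoef : η / 2 * (L ^ 2 * η ^ 2 * (m : ℝ)) ≤ η / 2 - L * η ^ 2 / 2 := by nlinarith
  have good : η / 2 * ∑ t ∈ Finset.range (m+1), Pv t
      ≤ (η / 2 - L * η ^ 2 / 2) * ∑ t ∈ Finset.range (m+1), Qv t := by
    calc η / 2 * ∑ t ∈ Finset.range (m+1), Pv t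
        ≤ η / 2 * (L ^ 2 * η ^ 2 * ((m:ℝ) * ∑ t ∈ Finset.range (m+1), Qv t)) :=
          mul_le_mul_of_nonneg_left hPbd (by positivity)
      _ = η / 2 * (L ^ 2 * η ^ 2 * (m:ℝ)) * ∑ t ∈ Finset.range (m+1), Qv t := by ring
      _ ≤ (η / 2 - L * η ^ 2 / 2) * ∑ t ∈ Finset.range (m+1), Qv t :=
          mul_le_mul_of_nonneg_right hcoef hQS
  have final := hsum
  rw [hG0] at final
  show G (m+1) + η / 2 * ∑ t ∈ Finset.range (m+1), Ngrad t ≤ _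
  linarith

end Loop2
def bigExt {n : ℕ} (hn : 0 < n) (S m : ℕ) (ω : Fin S → Fin m → Fin n) : ℕ → ℕ → Fin n :=
  fun s t => if h : s < S ∧ t < m then ω ⟨s, h.1⟩ ⟨t, h.2⟩ else ⟨0, hn⟩

lemma sarahE_eq {n m S : ℕ} (hn : 0 < n) (X : (ℕ → ℕ → Fin n) → ℝ) :
    sarahE n m S hn X
      = (∑ ω : Fin S → Fin m → Fin n, X (bigExt hn S m ω))
        / (Fintype.card (Fin S → Fin m → Fin n) : ℝ) := rfl

lemma bigExt_row {n m S : ℕ} (hn : 0 < n) (ω : Fin S → Fin m → Fin n) (s : ℕ) (hs : s < S) :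
    bigExt hn S m ω s = extSeq hn (ω ⟨s, hs⟩) := by
  funext t
  by_cases ht : t < m
  · simp [bigExt, extSeq, hs, ht]
  · simp [bigExt, extSeq, hs, ht]

lemma outerSeq_congr {d n m : ℕ} (f : Fin n → Vec d → ℝ) (F : Vec d → ℝ) (η : ℝ)
    (w0 : Vec d) (ι ι' : ℕ → ℕ → Fin n) :
    ∀ s : ℕ, (∀ s' < s, ι s' = ι' s') →
      outerSeq d n m f F η w0 ι s = outerSeq d n m f F η w0 ι' s := by
  intro s
  induction s with
  | zero => intro _; rfl
  | succ s ih =>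
    intro h
    have h1 := ih fun s' hs' => h s' (Nat.lt_succ_of_lt hs')
    have h2 := h s (Nat.lt_succ_self s)
    simp only [outerSeq, h1, h2]

lemma outer_step {d n m S : ℕ} (hn : 0 < n) (f : Fin n → Vec d → ℝ) (F : Vec d → ℝ) (η : ℝ)
    (hF : ∀ w, F w = (∑ i, f i w) / n) (hdiff : ∀ i, Differentiable ℝ (f i))
    (L : ℝ) (hL : 0 < L)
    (havg : ∀ w w' : Vec d,
      (∑ i, ‖gradient (f i) w - gradient (f i) w'‖ ^ 2) / n ≤ L ^ 2 * ‖w - w'‖ ^ 2)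
    (hη0 : 0 < η) (heta : L ^ 2 * η ^ 2 * m + L * η ≤ 1)
    (w0 : Vec d) (s : ℕ) (hsS : s < S) :
    ∑ ω : Fin S → Fin m → Fin n, F (outerSeq d n m f F η w0 (bigExt hn S m ω) (s+1))
      + η / 2 * ∑ t ∈ Finset.range (m+1), ∑ ω : Fin S → Fin m → Fin n,
          ‖gradient F (innerSeq d n f F η (outerSeq d n m f F η w0 (bigExt hn S m ω) s)
            (bigExt hn S m ω s) t).1‖ ^ 2
    ≤ ∑ ω : Fin S → Fin m → Fin n, F (outerSeq d n m f F η w0 (bigExt hn S m ω) s) := by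
  classical
  set ps : Fin S := ⟨s, hsS⟩ with hps
  set e := Equiv.funSplitAt ps (Fin m → Fin n) with he
  have esymm_self : ∀ (κ : Fin m → Fin n) (rest : {q : Fin S // q ≠ ps} → (Fin m → Fin n)),
      e.symm (κ, rest) ps = κ := by
    intro κ rest
    simp [he, Equiv.funSplitAt, Equiv.piSplitAt]
  have esymm_ne : ∀ (κ : Fin m → Fin n) (rest : {q : Fin S // q ≠ ps} → (Fin m → Fin n))
      (q : Fin S) (hq : q ≠ ps), e.symm (κ, rest) q = rest ⟨q, hq⟩ := by
    intro κ rest q hq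
    simp [he, Equiv.funSplitAt, Equiv.piSplitAt, hq]
  have hsum : ∀ (g : (Fin S → Fin m → Fin n) → ℝ),
      ∑ ω, g ω = ∑ rest : {q : Fin S // q ≠ ps} → (Fin m → Fin n), ∑ κ : Fin m → Fin n,
        g (e.symm (κ, rest)) := by
    intro g
    rw [← Equiv.sum_comp e.symm g, Fintype.sum_prod_type, Finset.sum_comm]
  have hrow : ∀ (κ κ' : Fin m → Fin n) (rest) (s' : ℕ), s' ≠ s →
      bigExt hn S m (e.symm (κ, rest)) s' = bigExt hn S m (e.symm (κ', rest)) s' := by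
    intro κ κ' rest s' hs'
    funext t
    by_cases h : s' < S ∧ t < m
    · have hne : (⟨s', h.1⟩ : Fin S) ≠ ps := by
        simp only [hps, ne_eq, Fin.mk.injEq]; exact hs'
      simp only [bigExt, dif_pos h, esymm_ne _ _ _ hne]
    · simp only [bigExt, dif_neg h]
  have hx0 : ∀ (κ : Fin m → Fin n) (rest),
      outerSeq d n m f F η w0 (bigExt hn S m (e.symm (κ, rest))) s
        = outerSeq d n m f F η w0
            (bigExt hn S m (e.symm (fun _ => ⟨0, hn⟩, rest))) s := by
    intro κ rest
    exact outerSeq_congr f F η w0 _ _ s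
      (fun s' hs' => hrow κ _ rest s' (Nat.ne_of_lt hs'))
  have hrowps : ∀ (κ : Fin m → Fin n) (rest),
      bigExt hn S m (e.symm (κ, rest)) s = extSeq hn κ := by
    intro κ rest
    rw [bigExt_row hn _ s hsS]
    exact congrArg (extSeq hn) (esymm_self κ rest)
  rw [hsum (fun ω => F (outerSeq d n m f F η w0 (bigExt hn S m ω) (s+1))),
    hsum (fun ω => F (outerSeq d n m f F η w0 (bigExt hn S m ω) s))]
  have hswap : ∑ t ∈ Finset.range (m+1), ∑ ω : Fin S → Fin m → Fin n,
      ‖gradient F (innerSeq d n f F η (outerSeq d n m f F η w0 (bigExt hn S m ω) s)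
        (bigExt hn S m ω s) t).1‖ ^ 2
      = ∑ rest : {q : Fin S // q ≠ ps} → (Fin m → Fin n), ∑ t ∈ Finset.range (m+1),
          ∑ κ : Fin m → Fin n,
          ‖gradient F (innerSeq d n f F η
            (outerSeq d n m f F η w0 (bigExt hn S m (e.symm (κ, rest))) s)
            (bigExt hn S m (e.symm (κ, rest)) s) t).1‖ ^ 2 := by
    rw [Finset.sum_congr rfl fun t _ => hsum (fun ω =>
      ‖gradient F (innerSeq d n f F η (outerSeq d n m f F η w0 (bigExt hn S m ω) s)
        (bigExt hn S m ω s) t).1‖ ^ 2)]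
    exact Finset.sum_comm
  rw [hswap, Finset.mul_sum, ← Finset.sum_add_distrib]
  apply Finset.sum_le_sum
  intro rest _
  set x0 : Vec d := outerSeq d n m f F η w0 (bigExt hn S m (e.symm (fun _ => ⟨0, hn⟩, rest))) s
    with hx0def
  have e1 : ∀ κ : Fin m → Fin n,
      outerSeq d n m f F η w0 (bigExt hn S m (e.symm (κ, rest))) (s+1)
        = (innerSeq d n f F η x0 (extSeq hn κ) (m+1)).1 := by
    intro κ
    show (innerSeq d n f F η (outerSeq d n m f F η w0 (bigExt hn S m (e.symm (κ, rest))) s)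
        (bigExt hn S m (e.symm (κ, rest)) s) (m+1)).1 = _
    rw [hx0 κ rest, hrowps κ rest]
  have e2 : ∀ (κ : Fin m → Fin n) (t : ℕ),
      innerSeq d n f F η (outerSeq d n m f F η w0 (bigExt hn S m (e.symm (κ, rest))) s)
        (bigExt hn S m (e.symm (κ, rest)) s) t
      = innerSeq d n f F η x0 (extSeq hn κ) t := by
    intro κ t
    rw [hx0 κ rest, hrowps κ rest]
  have e3 : ∀ κ : Fin m → Fin n,
      outerSeq d n m f F η w0 (bigExt hn S m (e.symm (κ, rest))) s = x0 := fun κ => hx0 κ rest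
  calc (∑ κ : Fin m → Fin n, F (outerSeq d n m f F η w0 (bigExt hn S m (e.symm (κ, rest))) (s+1)))
        + η / 2 * ∑ t ∈ Finset.range (m+1), ∑ κ : Fin m → Fin n,
          ‖gradient F (innerSeq d n f F η
            (outerSeq d n m f F η w0 (bigExt hn S m (e.symm (κ, rest))) s)
            (bigExt hn S m (e.symm (κ, rest)) s) t).1‖ ^ 2
      = (∑ κ : Fin m → Fin n, F (innerSeq d n f F η x0 (extSeq hn κ) (m+1)).1)
        + η / 2 * ∑ t ∈ Finset.range (m+1), ∑ κ : Fin m → Fin n,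
          ‖gradient F (innerSeq d n f F η x0 (extSeq hn κ) t).1‖ ^ 2 := by
        rw [Finset.sum_congr rfl fun κ _ => by rw [e1 κ]]
        congr 1
        rw [Finset.sum_congr rfl fun t _ => Finset.sum_congr rfl fun κ _ => by rw [e2 κ t]]
    _ ≤ (Fintype.card (Fin m → Fin n) : ℝ) * F x0 :=
        inner_loop hn f F η hF hdiff L hL havg hη0 heta x0
    _ = ∑ κ : Fin m → Fin n, F (outerSeq d n m f F η w0 (bigExt hn S m (e.symm (κ, rest))) s) := by
        rw [Finset.sum_congr rfl fun κ _ => by rw [e3 κ]]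
        rw [Finset.sum_const, Finset.card_univ, nsmul_eq_mul]
/-- **Convergence of SARAH for smooth nonconvex optimization** (Statement 1, Theorem 1
of the paper). Under average-`L`-smoothness and `0 < η ≤ 2/(L(√(1+4m)+1))`, for any
initial point `w̃_0 = w0` and any lower bound `F*` of `F`,
`(1/((m+1)S)) Σ_{s=1}^S Σ_{t=0}^m E[‖∇F(w_t^{(s)})‖²] ≤ (2/(η(m+1)S))(F(w̃_0) - F*)`. -/
theorem sarah_nonconvex_convergence
    (d n m S : ℕ) (hn : 0 < n) (hS : 0 < S)
    (f : Fin n → Vec d → ℝ) (F : Vec d → ℝ)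
    (hF : ∀ w, F w = (∑ i, f i w) / n)
    (hdiff : ∀ i, Differentiable ℝ (f i))
    (L η : ℝ) (hL : 0 < L)
    (havg : ∀ w w' : Vec d,
      (∑ i, ‖gradient (f i) w - gradient (f i) w'‖ ^ 2) / n ≤ L ^ 2 * ‖w - w'‖ ^ 2)
    (hη0 : 0 < η) (hη : η ≤ 2 / (L * (Real.sqrt (1 + 4 * (m : ℝ)) + 1)))
    (w0 : Vec d) (Fstar : ℝ) (hFstar : ∀ w, Fstar ≤ F w) :
    1 / (((m : ℝ) + 1) * (S : ℝ)) *
        ∑ s ∈ Finset.range S, ∑ t ∈ Finset.range (m + 1),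
          sarahE n m S hn (fun ω =>
            ‖gradient F (innerSeq d n f F η (outerSeq d n m f F η w0 ω s) (ω s) t).1‖ ^ 2)
      ≤ 2 / (η * (((m : ℝ) + 1) * (S : ℝ))) * (F w0 - Fstar) := by

  have heta : L ^ 2 * η ^ 2 * m + L * η ≤ 1 := eta_cond L η m hL hη0 hη
  haveI : Nonempty (Fin n) := ⟨⟨0, hn⟩⟩
  set N : ℝ := (Fintype.card (Fin S → Fin m → Fin n) : ℝ) with hN
  have hNpos : (0:ℝ) < N := by
    rw [hN]; exact_mod_cast Fintype.card_pos
  set G : ℕ → ℝ := fun s => ∑ ω : Fin S → Fin m → Fin n,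
      F (outerSeq d n m f F η w0 (bigExt hn S m ω) s) with hG
  set T : ℝ := ∑ s ∈ Finset.range S, ∑ t ∈ Finset.range (m+1),
      ∑ ω : Fin S → Fin m → Fin n,
      ‖gradient F (innerSeq d n f F η (outerSeq d n m f F η w0 (bigExt hn S m ω) s)
        (bigExt hn S m ω s) t).1‖ ^ 2 with hT
  have hstep : ∀ s ∈ Finset.range S, G (s+1) - G s
      ≤ -(η / 2) * ∑ t ∈ Finset.range (m+1), ∑ ω : Fin S → Fin m → Fin n,
          ‖gradient F (innerSeq d n f F η (outerSeq d n m f F η w0 (bigExt hn S m ω) s)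
            (bigExt hn S m ω s) t).1‖ ^ 2 := by
    intro s hs
    have := outer_step hn f F η hF hdiff L hL havg hη0 heta w0 s (Finset.mem_range.mp hs)
    simp only [hG]
    linarith
  have htel : G S - G 0 = ∑ s ∈ Finset.range S, (G (s+1) - G s) :=
    (Finset.sum_range_sub G S).symm
  have hsumstep : G S - G 0 ≤ -(η / 2) * T := by
    rw [htel, hT, Finset.mul_sum]
    exact Finset.sum_le_sum hstep
  have hG0 : G 0 = N * F w0 := by
    show ∑ _ω : Fin S → Fin m → Fin n, F w0 = N * F w0
    rw [Finset.sum_const, Finset.card_univ, nsmul_eq_mul, hN]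
  have hGS : N * Fstar ≤ G S := by
    have h := Finset.sum_le_sum
      (fun (ω : Fin S → Fin m → Fin n) (_ : ω ∈ Finset.univ) =>
        hFstar (outerSeq d n m f F η w0 (bigExt hn S m ω) S))
    simpa [Finset.sum_const, Finset.card_univ, nsmul_eq_mul, hN] using h
  have hmain : η / 2 * T ≤ N * (F w0 - Fstar) := by
    rw [hG0] at hsumstep
    nlinarith [hsumstep, hGS]
  have hsE : (∑ s ∈ Finset.range S, ∑ t ∈ Finset.range (m + 1),
      sarahE n m S hn (fun ω =>
        ‖gradient F (innerSeq d n f F η (outerSeq d n m f F η w0 ω s) (ω s) t).1‖ ^ 2))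
      = T / N := by
    simp only [sarahE_eq hn, ← Finset.sum_div, hN, hT]
  have key : T / N ≤ 2 / η * (F w0 - Fstar) := by
    rw [div_le_iff₀ hNpos]
    calc T = 2 / η * (η / 2 * T) := by field_simp
      _ ≤ 2 / η * (N * (F w0 - Fstar)) :=
          mul_le_mul_of_nonneg_left hmain (by positivity)
      _ = 2 / η * (F w0 - Fstar) * N := by ring
  rw [hsE]
  have hMpos : (0:ℝ) < ((m : ℝ) + 1) * (S : ℝ) := by
    have : (0:ℝ) < (S : ℝ) := by exact_mod_cast hS
    positivity
  calc 1 / (((m : ℝ) + 1) * (S : ℝ)) * (T / N)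
      ≤ 1 / (((m : ℝ) + 1) * (S : ℝ)) * (2 / η * (F w0 - Fstar)) :=
        mul_le_mul_of_nonneg_left key (by positivity)
    _ = 2 / (η * (((m : ℝ) + 1) * (S : ℝ))) * (F w0 - Fstar) := by
        have hfrac : 1 / (((m : ℝ) + 1) * (S : ℝ)) * (2 / η)
            = 2 / (η * (((m : ℝ) + 1) * (S : ℝ))) := by
          rw [div_mul_div_comm, one_mul, mul_comm]
        rw [← hfrac]
        ring


end
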